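/- Let S, L₁, I, L₂, R : [0, ∞) → ℝ solve the TB control system with continuous controls u₁, u₂ : [0, ∞) → [0,1], and suppose the initial condition lies in the set Δ = {(S, L₁, I, L₂, R) ∈ ℝ⁵ : all components ≥ 0 and S + L₁ + I + L₂ + R = N}. Then Δ is positively invariant: (S(t), L₁(t), I(t), L₂(t), R(t)) ∈ Δ for every t ≥ 0; in particular, 0 ≤ S(t), L₁(t), I(t), L₂(t), R(t) ≤ N for all t ≥ 0. -/

import Mathlib

open Set

lemma min_mul_self' (x : ℝ) : min x 0 * x = (min x 0)^2 := by
  rcases le_total x 0 with h | h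
  · rw [min_eq_left h]; ring
  · rw [min_eq_right h]; ring

lemma prod_lower (M a b : ℝ) (hM : 0 ≤ M) (ha : |a| ≤ M) (hb : |b| ≤ M) :
    M * (min a 0 + min b 0) ≤ a * b := by
  obtain ⟨ha1, ha2⟩ := abs_le.1 ha
  obtain ⟨hb1, hb2⟩ := abs_le.1 hb
  rcases le_total a 0 with h1 | h1 <;> rcases le_total b 0 with h2 | h2
  · rw [min_eq_left h1, min_eq_left h2]; nlinarith
  · rw [min_eq_left h1, min_eq_right h2]; nlinarith
  · rw [min_eq_right h1, min_eq_left h2]; nlinarith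
  · rw [min_eq_right h1, min_eq_right h2]; nlinarith

lemma lin_term (c x y : ℝ) (hc : 0 ≤ c) :
    min x 0 * (c * y) ≤ c * ((min x 0)^2 + (min y 0)^2) := by
  have h1 : min x 0 * y ≤ min x 0 * min y 0 :=
    mul_le_mul_of_nonpos_left (min_le_left y 0) (min_le_right x 0)
  have h2 : min x 0 * min y 0 ≤ (min x 0)^2 + (min y 0)^2 := by
    nlinarith [sq_nonneg (min x 0 - min y 0), sq_nonneg (min x 0), sq_nonneg (min y 0)]
  calc min x 0 * (c * y) = c * (min x 0 * y) := by ring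
    _ ≤ c * (min x 0 * min y 0) := mul_le_mul_of_nonneg_left h1 hc
    _ ≤ c * ((min x 0)^2 + (min y 0)^2) := mul_le_mul_of_nonneg_left h2 hc

lemma prod_term (c M x a b : ℝ) (hc : 0 ≤ c) (hM : 0 ≤ M) (ha : |a| ≤ M) (hb : |b| ≤ M) :
    min x 0 * (c * (a * b)) ≤ c * M * ((min x 0)^2 + (min a 0)^2 + (min b 0)^2) := by
  have h0 := prod_lower M a b hM ha hb
  have h1 : min x 0 * (a * b) ≤ min x 0 * (M * (min a 0 + min b 0)) :=
    mul_le_mul_of_nonpos_left h0 (min_le_right x 0)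
  have h2 : min x 0 * min a 0 + min x 0 * min b 0 ≤
      (min x 0)^2 + (min a 0)^2 + (min b 0)^2 := by
    nlinarith [sq_nonneg (min x 0 - min a 0), sq_nonneg (min x 0 - min b 0)]
  calc min x 0 * (c * (a * b)) = c * (min x 0 * (a * b)) := by ring
    _ ≤ c * (min x 0 * (M * (min a 0 + min b 0))) := mul_le_mul_of_nonneg_left h1 hc
    _ = c * M * (min x 0 * min a 0 + min x 0 * min b 0) := by ring
    _ ≤ c * M * ((min x 0)^2 + (min a 0)^2 + (min b 0)^2) :=
        mul_le_mul_of_nonneg_left h2 (mul_nonneg hc hM)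

lemma decay_term (c x : ℝ) (hc : 0 ≤ c) : min x 0 * (-(c * x)) ≤ 0 := by
  have h : min x 0 * (-(c * x)) = -(c * (min x 0)^2) := by
    rw [show min x 0 * (-(c * x)) = -(c * (min x 0 * x)) from by ring, min_mul_self' x]
  rw [h]
  exact neg_nonpos.2 (mul_nonneg hc (sq_nonneg _))

lemma own_prod_term (c M x i : ℝ) (hc : 0 ≤ c) (hi : |i| ≤ M) :
    min x 0 * (-(c * (i * x))) ≤ c * M * (min x 0)^2 := by
  have h2 : -i ≤ M := by have := (abs_le.1 hi).1; linarith
  calc min x 0 * (-(c * (i * x))) = (-i) * (c * (min x 0 * x)) := by ring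
    _ = (-i) * (c * (min x 0)^2) := by rw [min_mul_self']
    _ ≤ M * (c * (min x 0)^2) :=
        mul_le_mul_of_nonneg_right h2 (mul_nonneg hc (sq_nonneg _))
    _ = c * M * (min x 0)^2 := by ring

lemma hasDerivAt_minsq (x : ℝ) :
    HasDerivAt (fun y : ℝ => (min y 0)^2) (2 * min x 0) x := by
  rcases lt_trichotomy x 0 with hx | hx | hx
  · have h : HasDerivAt (fun y : ℝ => y^2) (2 * x) x := by
      simpa using (hasDerivAt_pow 2 x)
    have he : (fun y : ℝ => (min y 0)^2) =ᶠ[nhds x] (fun y : ℝ => y^2) := by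
      filter_upwards [Iio_mem_nhds hx] with y hy
      rw [min_eq_left (le_of_lt hy)]
    rw [min_eq_left (le_of_lt hx)]
    exact h.congr_of_eventuallyEq he
  · subst hx
    rw [min_self, mul_zero]
    rw [hasDerivAt_iff_isLittleO]
    rw [Asymptotics.isLittleO_iff]
    intro c hc
    filter_upwards [Metric.ball_mem_nhds (0:ℝ) hc] with y hy
    rw [Metric.mem_ball, Real.dist_eq, sub_zero] at hy
    have h1 : |min y 0| ≤ |y| := by
      rcases le_total y 0 with h | h
      · rw [min_eq_left h]
      · rw [min_eq_right h]; simp [abs_nonneg]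
    have : |(min y 0)^2| ≤ |y| * |y| := by
      rw [abs_pow, sq]
      exact mul_le_mul h1 h1 (abs_nonneg _) (abs_nonneg _)
    simp only [min_self, ne_eq, zero_pow, sub_zero, smul_zero, mul_zero]
    have h2 : |y| * |y| ≤ c * |y| := mul_le_mul_of_nonneg_right (le_of_lt hy) (abs_nonneg _)
    have h0 : (min (0:ℝ) 0)^2 = (0:ℝ) := by norm_num
    simp only [h0, smul_zero, sub_zero, Real.norm_eq_abs]
    have h3 : |(min y 0)^2 - 0^2| = |(min y 0)^2| := by norm_num
    rw [h3]
    exact le_trans this h2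
  · have he : (fun y : ℝ => (min y 0)^2) =ᶠ[nhds x] (fun _ : ℝ => (0:ℝ)) := by
      filter_upwards [Ioi_mem_nhds hx] with y hy
      rw [min_eq_right (le_of_lt hy)]; ring
    rw [min_eq_right (le_of_lt hx), mul_zero]
    exact (hasDerivAt_const x (0:ℝ)).congr_of_eventuallyEq he

lemma tb_key (b M δ ω ωR σ σR τ0 τ1 τ2 μ N φ v1 v2 s l1 i l2 r : ℝ)
    (hb : 0 ≤ b) (hM : 0 ≤ M) (hδ : 0 ≤ δ) (hω : 0 ≤ ω) (hωR : 0 ≤ ωR)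
    (hσ : 0 ≤ σ) (hσR : 0 ≤ σR) (hτ0 : 0 ≤ τ0) (hτ1 : 0 ≤ τ1) (hτ2 : 0 ≤ τ2)
    (hμ : 0 ≤ μ) (hN : 0 ≤ N) (hφ0 : 0 ≤ φ) (hφ1 : φ ≤ 1)
    (hv1 : 0 ≤ v1) (hv11 : v1 ≤ 1) (hv2 : 0 ≤ v2) (hv21 : v2 ≤ 1)
    (hs : |s| ≤ M) (hi : |i| ≤ M) (hl2 : |l2| ≤ M) (hr : |r| ≤ M) :
    2 * min s 0 * (μ * N - b * i * s - μ * s)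
    + 2 * min l1 0 * (b * i * (s + σ * l2 + σR * r) - (δ + τ1 * v1 + μ) * l1)
    + 2 * min i 0 * (φ * δ * l1 + ω * l2 + ωR * r - (τ0 + μ) * i)
    + 2 * min l2 0 * ((1 - φ) * δ * l1 - σ * b * i * l2 - (ω + τ2 * v2 + μ) * l2)
    + 2 * min r 0 * (τ0 * i + τ1 * v1 * l1 + τ2 * v2 * l2 - σR * b * i * r - (ωR + μ) * r)
    ≤ (b * M * (4 + 4 * σ + 4 * σR) + 4 * δ + 2 * ω + 2 * ωR + 2 * τ0 + 2 * τ1 + 2 * τ2) *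
      ((min s 0)^2 + (min l1 0)^2 + (min i 0)^2 + (min l2 0)^2 + (min r 0)^2) := by
  set m1 := min s 0 with hm1
  set m2 := min l1 0 with hm2
  set m3 := min i 0 with hm3
  set m4 := min l2 0 with hm4
  set m5 := min r 0 with hm5
  have q1 := sq_nonneg m1
  have q2 := sq_nonneg m2
  have q3 := sq_nonneg m3
  have q4 := sq_nonneg m4
  have q5 := sq_nonneg m5
  set Q := m1^2 + m2^2 + m3^2 + m4^2 + m5^2 with hQ
  have hQ0 : 0 ≤ Q := by positivity
  -- S equation terms
  have B1 : m1 * (μ * N) ≤ 0 :=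
    mul_nonpos_iff.2 (Or.inr ⟨min_le_right s 0, mul_nonneg hμ hN⟩)
  have B2 : m1 * (-(b * (i * s))) ≤ b * M * Q := by
    refine (own_prod_term b M s i hb hi).trans ?_
    have : m1^2 ≤ Q := by rw [hQ]; linarith
    exact mul_le_mul_of_nonneg_left this (mul_nonneg hb hM)
  have B3 : m1 * (-(μ * s)) ≤ 0 := decay_term μ s hμ
  -- L1 equation terms
  have B4 : m2 * (b * (i * s)) ≤ b * M * Q := by
    refine (prod_term b M l1 i s hb hM hi hs).trans ?_
    have : m2^2 + m3^2 + m1^2 ≤ Q := by rw [hQ]; linarith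
    exact mul_le_mul_of_nonneg_left this (mul_nonneg hb hM)
  have B5 : m2 * ((b * σ) * (i * l2)) ≤ b * σ * M * Q := by
    refine (prod_term (b * σ) M l1 i l2 (mul_nonneg hb hσ) hM hi hl2).trans ?_
    have h : m2^2 + m3^2 + m4^2 ≤ Q := by rw [hQ]; linarith
    exact mul_le_mul_of_nonneg_left h (by positivity)
  have B6 : m2 * ((b * σR) * (i * r)) ≤ b * σR * M * Q := by
    refine (prod_term (b * σR) M l1 i r (mul_nonneg hb hσR) hM hi hr).trans ?_
    have h : m2^2 + m3^2 + m5^2 ≤ Q := by rw [hQ]; linarith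
    exact mul_le_mul_of_nonneg_left h (by positivity)
  have B7 : m2 * (-((δ + τ1 * v1 + μ) * l1)) ≤ 0 :=
    decay_term _ l1 (by positivity)
  -- I equation terms
  have B8 : m3 * ((φ * δ) * l1) ≤ δ * Q := by
    refine (lin_term (φ * δ) i l1 (mul_nonneg hφ0 hδ)).trans ?_
    have h : φ * δ * (m3^2 + m2^2) ≤ δ * (m3^2 + m2^2) :=
      mul_le_mul_of_nonneg_right
        (by have := mul_le_mul_of_nonneg_right hφ1 hδ; linarith) (by positivity)
    refine h.trans ?_
    have h2 : m3^2 + m2^2 ≤ Q := by rw [hQ]; linarith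
    exact mul_le_mul_of_nonneg_left h2 hδ
  have B9 : m3 * (ω * l2) ≤ ω * Q := by
    refine (lin_term ω i l2 hω).trans ?_
    have h2 : m3^2 + m4^2 ≤ Q := by rw [hQ]; linarith
    exact mul_le_mul_of_nonneg_left h2 hω
  have B10 : m3 * (ωR * r) ≤ ωR * Q := by
    refine (lin_term ωR i r hωR).trans ?_
    have h2 : m3^2 + m5^2 ≤ Q := by rw [hQ]; linarith
    exact mul_le_mul_of_nonneg_left h2 hωR
  have B11 : m3 * (-((τ0 + μ) * i)) ≤ 0 := decay_term _ i (by positivity)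
  -- L2 equation terms
  have B12 : m4 * (((1 - φ) * δ) * l1) ≤ δ * Q := by
    refine (lin_term ((1 - φ) * δ) l2 l1 (mul_nonneg (by linarith) hδ)).trans ?_
    have h : (1 - φ) * δ * (m4^2 + m2^2) ≤ δ * (m4^2 + m2^2) :=
      mul_le_mul_of_nonneg_right
        (by have := mul_le_mul_of_nonneg_right (by linarith : (1:ℝ) - φ ≤ 1) hδ; linarith)
        (by positivity)
    refine h.trans ?_
    have h2 : m4^2 + m2^2 ≤ Q := by rw [hQ]; linarith
    exact mul_le_mul_of_nonneg_left h2 hδ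
  have B13 : m4 * (-((σ * b) * (i * l2))) ≤ σ * b * M * Q := by
    refine (own_prod_term (σ * b) M l2 i (mul_nonneg hσ hb) hi).trans ?_
    have h2 : m4^2 ≤ Q := by rw [hQ]; linarith
    exact mul_le_mul_of_nonneg_left h2 (by positivity)
  have B14 : m4 * (-((ω + τ2 * v2 + μ) * l2)) ≤ 0 := decay_term _ l2 (by positivity)
  -- R equation terms
  have B15 : m5 * (τ0 * i) ≤ τ0 * Q := by
    refine (lin_term τ0 r i hτ0).trans ?_
    have h2 : m5^2 + m3^2 ≤ Q := by rw [hQ]; linarith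
    exact mul_le_mul_of_nonneg_left h2 hτ0
  have B16 : m5 * ((τ1 * v1) * l1) ≤ τ1 * Q := by
    refine (lin_term (τ1 * v1) r l1 (mul_nonneg hτ1 hv1)).trans ?_
    have h : τ1 * v1 * (m5^2 + m2^2) ≤ τ1 * (m5^2 + m2^2) :=
      mul_le_mul_of_nonneg_right
        (by have := mul_le_mul_of_nonneg_left hv11 hτ1; linarith) (by positivity)
    refine h.trans ?_
    have h2 : m5^2 + m2^2 ≤ Q := by rw [hQ]; linarith
    exact mul_le_mul_of_nonneg_left h2 hτ1
  have B17 : m5 * ((τ2 * v2) * l2) ≤ τ2 * Q := by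
    refine (lin_term (τ2 * v2) r l2 (mul_nonneg hτ2 hv2)).trans ?_
    have h : τ2 * v2 * (m5^2 + m4^2) ≤ τ2 * (m5^2 + m4^2) :=
      mul_le_mul_of_nonneg_right
        (by have := mul_le_mul_of_nonneg_left hv21 hτ2; linarith) (by positivity)
    refine h.trans ?_
    have h2 : m5^2 + m4^2 ≤ Q := by rw [hQ]; linarith
    exact mul_le_mul_of_nonneg_left h2 hτ2
  have B18 : m5 * (-((σR * b) * (i * r))) ≤ σR * b * M * Q := by
    refine (own_prod_term (σR * b) M r i (mul_nonneg hσR hb) hi).trans ?_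
    have h2 : m5^2 ≤ Q := by rw [hQ]; linarith
    exact mul_le_mul_of_nonneg_left h2 (by positivity)
  have B19 : m5 * (-((ωR + μ) * r)) ≤ 0 := decay_term _ r (by positivity)
  have E : 2 * m1 * (μ * N - b * i * s - μ * s)
    + 2 * m2 * (b * i * (s + σ * l2 + σR * r) - (δ + τ1 * v1 + μ) * l1)
    + 2 * m3 * (φ * δ * l1 + ω * l2 + ωR * r - (τ0 + μ) * i)
    + 2 * m4 * ((1 - φ) * δ * l1 - σ * b * i * l2 - (ω + τ2 * v2 + μ) * l2)
    + 2 * m5 * (τ0 * i + τ1 * v1 * l1 + τ2 * v2 * l2 - σR * b * i * r - (ωR + μ) * r)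
    = 2 * (m1 * (μ * N) + m1 * (-(b * (i * s))) + m1 * (-(μ * s))
      + m2 * (b * (i * s)) + m2 * ((b * σ) * (i * l2)) + m2 * ((b * σR) * (i * r))
      + m2 * (-((δ + τ1 * v1 + μ) * l1))
      + m3 * ((φ * δ) * l1) + m3 * (ω * l2) + m3 * (ωR * r) + m3 * (-((τ0 + μ) * i))
      + m4 * (((1 - φ) * δ) * l1) + m4 * (-((σ * b) * (i * l2)))
      + m4 * (-((ω + τ2 * v2 + μ) * l2))
      + m5 * (τ0 * i) + m5 * ((τ1 * v1) * l1) + m5 * ((τ2 * v2) * l2)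
      + m5 * (-((σR * b) * (i * r))) + m5 * (-((ωR + μ) * r))) := by ring
  rw [E]
  have F : (b * M * (4 + 4 * σ + 4 * σR) + 4 * δ + 2 * ω + 2 * ωR + 2 * τ0 + 2 * τ1 + 2 * τ2) * Q
    = 2 * (b * M * Q + b * M * Q + b * σ * M * Q + b * σR * M * Q + δ * Q
      + ω * Q + ωR * Q + δ * Q + σ * b * M * Q + τ0 * Q + τ1 * Q + τ2 * Q
      + σR * b * M * Q) := by ring
  linarith [B1, B2, B3, B4, B5, B6, B7, B8, B9, B10, B11, B12, B13, B14, B15,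
    B16, B17, B18, B19]

open Set

/-- The compact simplex `Δ = {x ∈ ℝ⁵ : all components ≥ 0, sum = N}`. -/
def tbSimplex (N : ℝ) : Set (ℝ × ℝ × ℝ × ℝ × ℝ) :=
  {x | 0 ≤ x.1 ∧ 0 ≤ x.2.1 ∧ 0 ≤ x.2.2.1 ∧ 0 ≤ x.2.2.2.1 ∧ 0 ≤ x.2.2.2.2 ∧
      x.1 + x.2.1 + x.2.2.1 + x.2.2.2.1 + x.2.2.2.2 = N}

set_option maxHeartbeats 1000000 in
/-- The simplex `Δ` is positively invariant for the TB control system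
with continuous controls taking values in `[0,1]`: solutions starting in `Δ` remain in
`Δ` for all `t ≥ 0`; in particular every component stays in `[0, N]`. -/
theorem tb_simplex_positively_invariant
    (β μ δ ω ωR σ σR τ0 τ1 τ2 N φ : ℝ)
    (hβ : 0 < β) (hμ : 0 < μ) (hδ : 0 < δ) (hω : 0 < ω) (hωR : 0 < ωR)
    (hσ : 0 < σ) (hσR : 0 < σR) (hτ0 : 0 < τ0) (hτ1 : 0 < τ1) (hτ2 : 0 < τ2)
    (hN : 0 < N) (hφ : φ ∈ Set.Ioo (0 : ℝ) 1)
    (u1 u2 : ℝ → ℝ)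
    (hu1c : ContinuousOn u1 (Set.Ici 0)) (hu2c : ContinuousOn u2 (Set.Ici 0))
    (hu1 : ∀ t ∈ Set.Ici (0 : ℝ), u1 t ∈ Set.Icc (0 : ℝ) 1)
    (hu2 : ∀ t ∈ Set.Ici (0 : ℝ), u2 t ∈ Set.Icc (0 : ℝ) 1)
    (S L1 I L2 R : ℝ → ℝ)
    (hS : ∀ t ∈ Set.Ici (0 : ℝ),
      HasDerivWithinAt S (μ * N - β / N * I t * S t - μ * S t) (Set.Ici 0) t)
    (hL1 : ∀ t ∈ Set.Ici (0 : ℝ),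
      HasDerivWithinAt L1
        (β / N * I t * (S t + σ * L2 t + σR * R t) - (δ + τ1 * u1 t + μ) * L1 t)
        (Set.Ici 0) t)
    (hI : ∀ t ∈ Set.Ici (0 : ℝ),
      HasDerivWithinAt I
        (φ * δ * L1 t + ω * L2 t + ωR * R t - (τ0 + μ) * I t) (Set.Ici 0) t)
    (hL2 : ∀ t ∈ Set.Ici (0 : ℝ),
      HasDerivWithinAt L2
        ((1 - φ) * δ * L1 t - σ * (β / N) * I t * L2 t - (ω + τ2 * u2 t + μ) * L2 t)
        (Set.Ici 0) t)
    (hR : ∀ t ∈ Set.Ici (0 : ℝ),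
      HasDerivWithinAt R
        (τ0 * I t + τ1 * u1 t * L1 t + τ2 * u2 t * L2 t
          - σR * (β / N) * I t * R t - (ωR + μ) * R t) (Set.Ici 0) t)
    (hx0 : (S 0, L1 0, I 0, L2 0, R 0) ∈ tbSimplex N) :
    ∀ t ∈ Set.Ici (0 : ℝ),
      (S t, L1 t, I t, L2 t, R t) ∈ tbSimplex N ∧
      S t ∈ Set.Icc 0 N ∧ L1 t ∈ Set.Icc 0 N ∧ I t ∈ Set.Icc 0 N ∧
      L2 t ∈ Set.Icc 0 N ∧ R t ∈ Set.Icc 0 N := by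
  simp only [tbSimplex, Set.mem_setOf_eq] at hx0
  obtain ⟨h01, h02, h03, h04, h05, h0sum⟩ := hx0
  -- continuity of the solution
  have hSc : ContinuousOn S (Set.Ici 0) := fun x hx => (hS x hx).continuousWithinAt
  have hL1c : ContinuousOn L1 (Set.Ici 0) := fun x hx => (hL1 x hx).continuousWithinAt
  have hIc : ContinuousOn I (Set.Ici 0) := fun x hx => (hI x hx).continuousWithinAt
  have hL2c : ContinuousOn L2 (Set.Ici 0) := fun x hx => (hL2 x hx).continuousWithinAt
  have hRc : ContinuousOn R (Set.Ici 0) := fun x hx => (hR x hx).continuousWithinAt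
  -- the total population is constant
  have hWd : ∀ τ ∈ Set.Ici (0:ℝ),
      HasDerivWithinAt (fun y => S y + L1 y + I y + L2 y + R y)
        (μ * N - μ * (S τ + L1 τ + I τ + L2 τ + R τ)) (Set.Ici 0) τ := by
    intro τ hτ
    have h := ((((hS τ hτ).add (hL1 τ hτ)).add (hI τ hτ)).add (hL2 τ hτ)).add (hR τ hτ)
    exact h.congr_deriv (by ring)
  have hsum : ∀ τ ∈ Set.Ici (0:ℝ), S τ + L1 τ + I τ + L2 τ + R τ = N := by
    intro τ hτ
    have hcont : ContinuousOn
        (fun y => (S y + L1 y + I y + L2 y + R y - N) * Real.exp (μ * y))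
        (Set.Icc 0 τ) := by
      apply ContinuousOn.mul
      · exact (((((hSc.add hL1c).add hIc).add hL2c).add hRc).sub continuousOn_const).mono
          Set.Icc_subset_Ici_self
      · exact (Real.continuous_exp.comp (continuous_const.mul continuous_id)).continuousOn
    have hd : ∀ x ∈ Set.Ico 0 τ,
        HasDerivWithinAt
          (fun y => (S y + L1 y + I y + L2 y + R y - N) * Real.exp (μ * y))
          0 (Set.Ici x) x := by
      intro x hx
      have h1 := (hWd x hx.1).sub_const N
      have h2 : HasDerivAt (fun y => Real.exp (μ * y)) (Real.exp (μ * x) * μ) x := by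
        simpa using (((hasDerivAt_id x).const_mul μ).exp)
      have h3 := h1.mul h2.hasDerivWithinAt
      have h4 := h3.mono (Set.Ici_subset_Ici.2 hx.1)
      exact h4.congr_deriv (by ring)
    have hconst := constant_of_has_deriv_right_zero hcont hd τ ⟨hτ, le_rfl⟩
    simp only [h0sum, mul_zero, Real.exp_zero, sub_self, zero_mul] at hconst
    have he : Real.exp (μ * τ) ≠ 0 := (Real.exp_pos _).ne'
    have := mul_eq_zero.1 hconst
    rcases this with h | h
    · linarith [sub_eq_zero.1 h]
    · exact absurd h he
  -- uniform bound on [0, t]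
  intro t ht
  obtain ⟨C1, hC1⟩ := (isCompact_Icc : IsCompact (Set.Icc (0:ℝ) t)).exists_bound_of_continuousOn
    (hSc.mono Set.Icc_subset_Ici_self)
  obtain ⟨C2, hC2⟩ := (isCompact_Icc : IsCompact (Set.Icc (0:ℝ) t)).exists_bound_of_continuousOn
    (hL1c.mono Set.Icc_subset_Ici_self)
  obtain ⟨C3, hC3⟩ := (isCompact_Icc : IsCompact (Set.Icc (0:ℝ) t)).exists_bound_of_continuousOn
    (hIc.mono Set.Icc_subset_Ici_self)
  obtain ⟨C4, hC4⟩ := (isCompact_Icc : IsCompact (Set.Icc (0:ℝ) t)).exists_bound_of_continuousOn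
    (hL2c.mono Set.Icc_subset_Ici_self)
  obtain ⟨C5, hC5⟩ := (isCompact_Icc : IsCompact (Set.Icc (0:ℝ) t)).exists_bound_of_continuousOn
    (hRc.mono Set.Icc_subset_Ici_self)
  set M : ℝ := max 0 (max C1 (max C2 (max C3 (max C4 C5)))) with hMdef
  have hM : 0 ≤ M := le_max_left _ _
  have hbS : ∀ τ ∈ Set.Icc (0:ℝ) t, |S τ| ≤ M := fun τ hτ =>
    (hC1 τ hτ).trans ((le_max_left C1 _).trans (le_max_right 0 _))
  have hbL1 : ∀ τ ∈ Set.Icc (0:ℝ) t, |L1 τ| ≤ M := fun τ hτ =>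
    (hC2 τ hτ).trans (((le_max_left C2 _).trans (le_max_right C1 _)).trans (le_max_right 0 _))
  have hbI : ∀ τ ∈ Set.Icc (0:ℝ) t, |I τ| ≤ M := fun τ hτ =>
    (hC3 τ hτ).trans ((((le_max_left C3 _).trans (le_max_right C2 _)).trans
      (le_max_right C1 _)).trans (le_max_right 0 _))
  have hbL2 : ∀ τ ∈ Set.Icc (0:ℝ) t, |L2 τ| ≤ M := fun τ hτ =>
    (hC4 τ hτ).trans (((((le_max_left C4 C5).trans (le_max_right C3 _)).trans
      (le_max_right C2 _)).trans (le_max_right C1 _)).trans (le_max_right 0 _))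
  have hbR : ∀ τ ∈ Set.Icc (0:ℝ) t, |R τ| ≤ M := fun τ hτ =>
    (hC5 τ hτ).trans (((((le_max_right C4 C5).trans (le_max_right C3 _)).trans
      (le_max_right C2 _)).trans (le_max_right C1 _)).trans (le_max_right 0 _))
  set K : ℝ := β / N * M * (4 + 4 * σ + 4 * σR) + 4 * δ + 2 * ω + 2 * ωR
    + 2 * τ0 + 2 * τ1 + 2 * τ2 with hKdef
  have hb : (0:ℝ) ≤ β / N := le_of_lt (div_pos hβ hN)
  -- derivative of the Lyapunov-type function on the interior
  have hder : ∀ τ ∈ Set.Ioo (0:ℝ) t, ∃ d, d ≤ 0 ∧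
      HasDerivAt (fun y => ((min (S y) 0)^2 + (min (L1 y) 0)^2 + (min (I y) 0)^2
        + (min (L2 y) 0)^2 + (min (R y) 0)^2) * Real.exp (-K * y)) d τ := by
    intro τ hτ
    have hτge : (0:ℝ) ≤ τ := le_of_lt hτ.1
    have hmem : τ ∈ Set.Ici (0:ℝ) := hτge
    have hτI : τ ∈ Set.Icc (0:ℝ) t := ⟨hτge, le_of_lt hτ.2⟩
    have d1 : HasDerivWithinAt (fun y => (min (S y) 0)^2)
        (2 * min (S τ) 0 * (μ * N - β / N * I τ * S τ - μ * S τ)) (Set.Ici 0) τ :=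
      (hasDerivAt_minsq (S τ)).comp_hasDerivWithinAt τ (hS τ hmem)
    have d2 : HasDerivWithinAt (fun y => (min (L1 y) 0)^2)
        (2 * min (L1 τ) 0 * (β / N * I τ * (S τ + σ * L2 τ + σR * R τ)
          - (δ + τ1 * u1 τ + μ) * L1 τ)) (Set.Ici 0) τ :=
      (hasDerivAt_minsq (L1 τ)).comp_hasDerivWithinAt τ (hL1 τ hmem)
    have d3 : HasDerivWithinAt (fun y => (min (I y) 0)^2)
        (2 * min (I τ) 0 * (φ * δ * L1 τ + ω * L2 τ + ωR * R τ - (τ0 + μ) * I τ))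
        (Set.Ici 0) τ :=
      (hasDerivAt_minsq (I τ)).comp_hasDerivWithinAt τ (hI τ hmem)
    have d4 : HasDerivWithinAt (fun y => (min (L2 y) 0)^2)
        (2 * min (L2 τ) 0 * ((1 - φ) * δ * L1 τ - σ * (β / N) * I τ * L2 τ
          - (ω + τ2 * u2 τ + μ) * L2 τ)) (Set.Ici 0) τ :=
      (hasDerivAt_minsq (L2 τ)).comp_hasDerivWithinAt τ (hL2 τ hmem)
    have d5 : HasDerivWithinAt (fun y => (min (R y) 0)^2)
        (2 * min (R τ) 0 * (τ0 * I τ + τ1 * u1 τ * L1 τ + τ2 * u2 τ * L2 τ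
          - σR * (β / N) * I τ * R τ - (ωR + μ) * R τ)) (Set.Ici 0) τ :=
      (hasDerivAt_minsq (R τ)).comp_hasDerivWithinAt τ (hR τ hmem)
    have hn := (((d1.add d2).add d3).add d4).add d5
    have hexp : HasDerivAt (fun y => Real.exp (-K * y)) (Real.exp (-K * τ) * -K) τ := by
      simpa using (((hasDerivAt_id τ).const_mul (-K)).exp)
    have hg1 := hn.mul hexp.hasDerivWithinAt
    have hg2 := hg1.hasDerivAt (Ici_mem_nhds hτ.1)
    refine ⟨_, ?_, hg2⟩
    have hk := tb_key (β / N) M δ ω ωR σ σR τ0 τ1 τ2 μ N φ (u1 τ) (u2 τ)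
      (S τ) (L1 τ) (I τ) (L2 τ) (R τ) hb hM (le_of_lt hδ) (le_of_lt hω)
      (le_of_lt hωR) (le_of_lt hσ) (le_of_lt hσR) (le_of_lt hτ0) (le_of_lt hτ1)
      (le_of_lt hτ2) (le_of_lt hμ) (le_of_lt hN) (le_of_lt hφ.1) (le_of_lt hφ.2)
      (hu1 τ hmem).1 (hu1 τ hmem).2 (hu2 τ hmem).1 (hu2 τ hmem).2
      (hbS τ hτI) (hbI τ hτI) (hbL2 τ hτI) (hbR τ hτI)
    have hk' : 2 * min (S τ) 0 * (μ * N - β / N * I τ * S τ - μ * S τ)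
        + 2 * min (L1 τ) 0 * (β / N * I τ * (S τ + σ * L2 τ + σR * R τ)
          - (δ + τ1 * u1 τ + μ) * L1 τ)
        + 2 * min (I τ) 0 * (φ * δ * L1 τ + ω * L2 τ + ωR * R τ - (τ0 + μ) * I τ)
        + 2 * min (L2 τ) 0 * ((1 - φ) * δ * L1 τ - σ * (β / N) * I τ * L2 τ
          - (ω + τ2 * u2 τ + μ) * L2 τ)
        + 2 * min (R τ) 0 * (τ0 * I τ + τ1 * u1 τ * L1 τ + τ2 * u2 τ * L2 τ
          - σR * (β / N) * I τ * R τ - (ωR + μ) * R τ)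
        ≤ K * ((min (S τ) 0)^2 + (min (L1 τ) 0)^2 + (min (I τ) 0)^2
          + (min (L2 τ) 0)^2 + (min (R τ) 0)^2) := by
      rw [hKdef]; exact hk
    have he := Real.exp_pos (-K * τ)
    have h2 : ∀ D Q E : ℝ, D ≤ K * Q → 0 < E → D * E + Q * (E * -K) ≤ 0 := by
      intro D Q E h hE
      have heq : D * E + Q * (E * -K) = (D - K * Q) * E := by ring
      rw [heq]
      exact mul_nonpos_iff.2 (Or.inr ⟨by linarith, hE.le⟩)
    exact h2 _ _ _ hk' he
  -- the Lyapunov function is antitone on [0, t]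
  have hgc : ContinuousOn (fun y => ((min (S y) 0)^2 + (min (L1 y) 0)^2 + (min (I y) 0)^2
      + (min (L2 y) 0)^2 + (min (R y) 0)^2) * Real.exp (-K * y)) (Set.Icc 0 t) := by
    apply ContinuousOn.mul
    · exact (((((((continuous_id.min continuous_const).comp_continuousOn hSc).pow 2).add
        (((continuous_id.min continuous_const).comp_continuousOn hL1c).pow 2)).add
        (((continuous_id.min continuous_const).comp_continuousOn hIc).pow 2)).add
        (((continuous_id.min continuous_const).comp_continuousOn hL2c).pow 2)).add
        (((continuous_id.min continuous_const).comp_continuousOn hRc).pow 2)).mono Set.Icc_subset_Ici_self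
    · exact (Real.continuous_exp.comp (continuous_const.mul continuous_id)).continuousOn
  have hanti : AntitoneOn (fun y => ((min (S y) 0)^2 + (min (L1 y) 0)^2 + (min (I y) 0)^2
      + (min (L2 y) 0)^2 + (min (R y) 0)^2) * Real.exp (-K * y)) (Set.Icc 0 t) := by
    apply antitoneOn_of_deriv_nonpos (convex_Icc 0 t) hgc
    · intro τ hτ
      rw [interior_Icc] at hτ
      obtain ⟨d, hd0, hdd⟩ := hder τ hτ
      exact hdd.differentiableAt.differentiableWithinAt
    · intro τ hτ
      rw [interior_Icc] at hτ
      obtain ⟨d, hd0, hdd⟩ := hder τ hτ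
      rw [hdd.deriv]; exact hd0
  have hg_le := hanti (Set.left_mem_Icc.2 ht) (Set.right_mem_Icc.2 ht) ht
  simp only [min_eq_right h01, min_eq_right h02, min_eq_right h03, min_eq_right h04,
    min_eq_right h05] at hg_le
  norm_num at hg_le
  -- hence all components are nonnegative at t
  have hEpos : 0 < Real.exp (-(K * t)) := Real.exp_pos _
  have hQt : (min (S t) 0)^2 + (min (L1 t) 0)^2 + (min (I t) 0)^2
      + (min (L2 t) 0)^2 + (min (R t) 0)^2 ≤ 0 := by
    by_contra hc
    push_neg at hc
    nlinarith [mul_pos hc hEpos]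
  have q1 := sq_nonneg (min (S t) 0)
  have q2 := sq_nonneg (min (L1 t) 0)
  have q3 := sq_nonneg (min (I t) 0)
  have q4 := sq_nonneg (min (L2 t) 0)
  have q5 := sq_nonneg (min (R t) 0)
  have hSt : 0 ≤ S t := min_eq_right_iff.1 (sq_eq_zero_iff.1 (by linarith))
  have hL1t : 0 ≤ L1 t := min_eq_right_iff.1 (sq_eq_zero_iff.1 (by linarith))
  have hIt : 0 ≤ I t := min_eq_right_iff.1 (sq_eq_zero_iff.1 (by linarith))
  have hL2t : 0 ≤ L2 t := min_eq_right_iff.1 (sq_eq_zero_iff.1 (by linarith))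
  have hRt : 0 ≤ R t := min_eq_right_iff.1 (sq_eq_zero_iff.1 (by linarith))
  have hsumt := hsum t ht
  refine ⟨⟨hSt, hL1t, hIt, hL2t, hRt, hsumt⟩, ⟨hSt, by linarith⟩, ⟨hL1t, by linarith⟩,
    ⟨hIt, by linarith⟩, ⟨hL2t, by linarith⟩, ⟨hRt, by linarith⟩⟩
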